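/- In the Nichols algebra B(V) of a diagonal braiding with constants q_{ij}, the element (ad_σ x_i)^{m_{ij}+1}(x_j) = 0 and (ad_σ x_i)^{m_{ij}}(x_j) ≠ 0, where m_{ij} = min{ m ∈ ℕ₀ : [m+1]_{q_{ii}}(q_{ii}^m q_{ij} q_{ji} − 1) = 0 }, provided this minimum exists. -/

import Mathlib

noncomputable section

open FreeAlgebra

/-- The product in the free algebra of the generators indexed by a word. -/
def wordProd {k : Type*} [Field k] {n : ℕ} (w : List (Fin n)) :
    FreeAlgebra k (Fin n) :=
  (w.map (FreeAlgebra.ι k)).prod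

/-- The left skew-differential operator `∂ᵢᴸ` on words, defined by
`∂ᵢ(x_j w) = δ_{ij} w + q_{ij}⁻¹ x_j ∂ᵢ(w)` (the twisted Leibniz rule for the
diagonal braiding with constants `q`). -/
def Dword {k : Type*} [Field k] {n : ℕ} (q : Fin n → Fin n → k) (i : Fin n) :
    List (Fin n) → FreeAlgebra k (Fin n)
  | [] => 0
  | j :: t => (if i = j then wordProd t else 0)
      + (q i j)⁻¹ • (FreeAlgebra.ι k j * Dword q i t)

/-- The left skew-differential operator `∂ᵢᴸ`, extended linearly to the free
algebra using its basis of words. -/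
def Dop {k : Type*} [Field k] {n : ℕ} (q : Fin n → Fin n → k) (i : Fin n) :
    FreeAlgebra k (Fin n) →ₗ[k] FreeAlgebra k (Fin n) :=
  (FreeAlgebra.basisFreeMonoid k (Fin n)).constr k
    fun w : FreeMonoid (Fin n) => Dword q i w.toList

/-- The counit (constant-term functional) of the free algebra. -/
def constTerm (k : Type*) [Field k] (n : ℕ) : FreeAlgebra k (Fin n) →ₐ[k] k :=
  FreeAlgebra.lift k (fun _ : Fin n => (0 : k))

/-- Iterated application of the differential operators along a word. -/
def DopWord {k : Type*} [Field k] {n : ℕ} (q : Fin n → Fin n → k) :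
    List (Fin n) → (FreeAlgebra k (Fin n) →ₗ[k] FreeAlgebra k (Fin n)) :=
  fun w => w.foldr (fun i f => (Dop q i).comp f) LinearMap.id

/-- The defining relation of the Nichols algebra `B(V)` of the diagonal braiding
with constants `q`: two elements of the tensor (free) algebra are identified iff
their difference is annihilated, after applying any composition of
skew-differential operators, by the constant-term functional.  (The set of such
differences is exactly the kernel of the braided symmetrizer maps, i.e. the
defining ideal of the Nichols algebra.) -/
def nicholsRel {k : Type*} [Field k] {n : ℕ} (q : Fin n → Fin n → k) :
    FreeAlgebra k (Fin n) → FreeAlgebra k (Fin n) → Prop :=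
  fun x y => ∀ w : List (Fin n), constTerm k n (DopWord q w (x - y)) = 0

/-- The action of the group-like element `gᵢ` on the free algebra. -/
def gAct {k : Type*} [Field k] {n : ℕ} (q : Fin n → Fin n → k) (i : Fin n) :
    FreeAlgebra k (Fin n) →ₐ[k] FreeAlgebra k (Fin n) :=
  FreeAlgebra.lift k (fun j : Fin n => q i j • FreeAlgebra.ι k j)

/-- The braided adjoint action `ad_σ xᵢ (ρ) = xᵢ ρ - (gᵢ·ρ) xᵢ`. -/
def adSigma {k : Type*} [Field k] {n : ℕ} (q : Fin n → Fin n → k) (i : Fin n) :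
    FreeAlgebra k (Fin n) → FreeAlgebra k (Fin n) :=
  fun ρ => FreeAlgebra.ι k i * ρ - gAct q i ρ * FreeAlgebra.ι k i

section NicholsAux

variable {k : Type*} [Field k] {n : ℕ}

theorem wordProd_nil : wordProd ([] : List (Fin n)) = (1 : FreeAlgebra k (Fin n)) := rfl

theorem wordProd_cons (a : Fin n) (t : List (Fin n)) :
    wordProd (a :: t) = (FreeAlgebra.ι k a) * wordProd t := by
  simp [wordProd]

theorem equiv_wordProd (l : List (Fin n)) :
    equivMonoidAlgebraFreeMonoid (wordProd l : FreeAlgebra k (Fin n)) =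
      MonoidAlgebra.single (FreeMonoid.ofList l) 1 := by
  induction l with
  | nil =>
    rw [wordProd_nil, map_one]
    rfl
  | cons a t ih =>
    rw [wordProd_cons, map_mul, ih]
    rw [show equivMonoidAlgebraFreeMonoid (FreeAlgebra.ι k a)
        = MonoidAlgebra.single (FreeMonoid.of a) 1 by
      simp [equivMonoidAlgebraFreeMonoid, MonoidAlgebra.of_apply]]
    rw [MonoidAlgebra.single_mul_single, one_mul, FreeMonoid.ofList_cons]

theorem basisFreeMonoid_eq (m : FreeMonoid (Fin n)) :
    (FreeAlgebra.basisFreeMonoid k (Fin n)) m = wordProd m.toList := by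
  rw [FreeAlgebra.basisFreeMonoid, Module.Basis.map_apply]
  have h1 : (Finsupp.basisSingleOne m : FreeMonoid (Fin n) →₀ k) = Finsupp.single m 1 := by
    simp [Finsupp.coe_basisSingleOne]
  rw [h1]
  have := equiv_wordProd (k := k) m.toList
  rw [FreeMonoid.ofList_toList] at this
  rw [← equivMonoidAlgebraFreeMonoid.symm_apply_apply (wordProd (k := k) m.toList), this]
  rfl

theorem Dop_wordProd (q : Fin n → Fin n → k) (i : Fin n) (l : List (Fin n)) :
    Dop q i (wordProd l) = Dword q i l := by
  have := Module.Basis.constr_basis (FreeAlgebra.basisFreeMonoid k (Fin n)) k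
    (fun w : FreeMonoid (Fin n) => Dword q i w.toList) (FreeMonoid.ofList l)
  rw [basisFreeMonoid_eq] at this
  simpa [Dop] using this

theorem Dop_one (q : Fin n → Fin n → k) (i : Fin n) :
    Dop q i (1 : FreeAlgebra k (Fin n)) = 0 := by
  have := Dop_wordProd q i []
  simpa [Dword, wordProd_nil] using this

end NicholsAux
section NicholsAux2

variable {k : Type*} [Field k] {n : ℕ}

theorem Dop_ι_mul (q : Fin n → Fin n → k) (a l : Fin n) (v : FreeAlgebra k (Fin n)) :
    Dop q a (FreeAlgebra.ι k l * v) =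
      (if a = l then v else 0) + (q a l)⁻¹ • (FreeAlgebra.ι k l * Dop q a v) := by
  have hmaps : (Dop q a).comp (LinearMap.mulLeft k (FreeAlgebra.ι k l)) =
      (if a = l then (LinearMap.id : FreeAlgebra k (Fin n) →ₗ[k] FreeAlgebra k (Fin n)) else 0)
        + (q a l)⁻¹ • (LinearMap.mulLeft k (FreeAlgebra.ι k l)).comp (Dop q a) := by
    apply Module.Basis.ext (FreeAlgebra.basisFreeMonoid k (Fin n))
    intro m
    rw [basisFreeMonoid_eq]
    simp only [LinearMap.comp_apply, LinearMap.mulLeft_apply, LinearMap.add_apply,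
      LinearMap.smul_apply]
    rw [← wordProd_cons, Dop_wordProd, Dop_wordProd]
    show Dword q a (l :: m.toList) = _
    rw [Dword]
    by_cases h : a = l <;> simp [h]
  have := congrArg (fun f => f v) hmaps
  simp only [LinearMap.comp_apply, LinearMap.mulLeft_apply, LinearMap.add_apply,
    LinearMap.smul_apply] at this
  rw [this]
  by_cases h : a = l <;> simp [h]

theorem Dop_ι (q : Fin n → Fin n → k) (a l : Fin n) :
    Dop q a (FreeAlgebra.ι k l) = if a = l then 1 else 0 := by
  have := Dop_ι_mul q a l (1 : FreeAlgebra k (Fin n))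
  rw [mul_one, Dop_one] at this
  simpa using this

theorem constTerm_ι (l : Fin n) : constTerm k n (FreeAlgebra.ι k l) = 0 := by
  simp [constTerm]

theorem gAct_ι (r : Fin n → Fin n → k) (a l : Fin n) :
    gAct r a (FreeAlgebra.ι k l) = r a l • FreeAlgebra.ι k l := by
  simp [gAct]

theorem constTerm_gAct (r : Fin n → Fin n → k) (a : Fin n) (x : FreeAlgebra k (Fin n)) :
    constTerm k n (gAct r a x) = constTerm k n x := by
  have : (constTerm k n).comp (gAct r a) = constTerm k n := by
    apply FreeAlgebra.hom_ext
    funext l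
    simp [gAct_ι, constTerm_ι]
  exact congrArg (fun f => f x) this

theorem Dop_mul (q : Fin n → Fin n → k) (a : Fin n) (u v : FreeAlgebra k (Fin n)) :
    Dop q a (u * v) = Dop q a u * v
      + gAct (fun s t => (q s t)⁻¹) a u * Dop q a v := by
  induction u using FreeAlgebra.induction generalizing v with
  | grade0 c =>
    rw [Algebra.algebraMap_eq_smul_one]
    simp [Dop_one]
  | grade1 x =>
    rw [Dop_ι_mul, Dop_ι, gAct_ι, smul_mul_assoc]
    by_cases h : a = x <;> simp [h]
  | mul u₁ u₂ ih₁ ih₂ =>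
    rw [mul_assoc, ih₁, ih₂, ih₁ u₂]
    simp only [map_mul]
    rw [mul_add, add_mul, mul_assoc, mul_assoc, mul_assoc, ← add_assoc]
  | add u₁ u₂ ih₁ ih₂ =>
    simp only [add_mul, map_add, ih₁, ih₂]
    abel

end NicholsAux2
section NicholsAux3

variable {k : Type*} [Field k] {n : ℕ}

theorem Dop_gAct (q r : Fin n → Fin n → k) (a b : Fin n) (x : FreeAlgebra k (Fin n)) :
    Dop q b (gAct r a x) = r a b • gAct r a (Dop q b x) := by
  have hmaps : (Dop q b).comp (gAct r a).toLinearMap =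
      r a b • ((gAct r a).toLinearMap.comp (Dop q b)) := by
    apply Module.Basis.ext (FreeAlgebra.basisFreeMonoid k (Fin n))
    intro m
    rw [basisFreeMonoid_eq]
    simp only [LinearMap.comp_apply, AlgHom.toLinearMap_apply, LinearMap.smul_apply]
    induction m.toList with
    | nil =>
      simp [wordProd_nil, Dop_one]
    | cons c t ih =>
      rw [wordProd_cons, map_mul, gAct_ι, smul_mul_assoc, map_smul, Dop_ι_mul, Dop_ι_mul,
        smul_add, map_add, map_smul, map_mul, gAct_ι, smul_add, smul_smul, smul_smul]
      congr 1
      · by_cases h : b = c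
        · subst h; simp
        · simp [h]
      · rw [ih]
        simp only [smul_mul_assoc, mul_smul_comm, smul_smul]
        ring_nf
  have := congrArg (fun f => f x) hmaps
  simpa using this

theorem DopWord_nil (q : Fin n → Fin n → k) :
    DopWord q ([] : List (Fin n)) = LinearMap.id := rfl

theorem DopWord_cons (q : Fin n → Fin n → k) (a : Fin n) (t : List (Fin n)) :
    DopWord q (a :: t) = (Dop q a).comp (DopWord q t) := rfl

theorem DopWord_append (q : Fin n → Fin n → k) (s t : List (Fin n)) :
    DopWord q (s ++ t) = (DopWord q s).comp (DopWord q t) := by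
  induction s with
  | nil => simp [DopWord_nil]
  | cons a s' ih =>
    rw [List.cons_append, DopWord_cons, DopWord_cons, ih, LinearMap.comp_assoc]

theorem DopWord_gAct (q r : Fin n → Fin n → k) (a : Fin n) (w : List (Fin n))
    (x : FreeAlgebra k (Fin n)) :
    DopWord q w (gAct r a x) = (w.map (r a)).prod • gAct r a (DopWord q w x) := by
  induction w generalizing x with
  | nil => simp [DopWord_nil]
  | cons b t ih =>
    rw [DopWord_cons, LinearMap.comp_apply, ih, map_smul, Dop_gAct, LinearMap.comp_apply,
      smul_smul, List.map_cons, List.prod_cons, mul_comm]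

/-- The ideal-membership predicate. -/
def memI (q : Fin n → Fin n → k) (z : FreeAlgebra k (Fin n)) : Prop :=
  ∀ w : List (Fin n), constTerm k n (DopWord q w z) = 0

theorem memI.Dop {q : Fin n → Fin n → k} {z : FreeAlgebra k (Fin n)} (hz : memI q z)
    (a : Fin n) : memI q (Dop q a z) := by
  intro w
  have := hz (w ++ [a])
  rw [DopWord_append] at this
  simpa [DopWord_cons, DopWord_nil] using this

theorem memI.gAct {q : Fin n → Fin n → k} {z : FreeAlgebra k (Fin n)} (hz : memI q z)
    (r : Fin n → Fin n → k) (a : Fin n) : memI q (gAct r a z) := by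
  intro w
  rw [DopWord_gAct, map_smul, constTerm_gAct, hz w, smul_zero]

theorem memI.mul_left {q : Fin n → Fin n → k} {z : FreeAlgebra k (Fin n)} (hz : memI q z)
    (u : FreeAlgebra k (Fin n)) : memI q (u * z) := by
  intro w
  induction w using List.reverseRecOn generalizing u z with
  | nil =>
    have h0 := hz []
    rw [DopWord_nil] at h0
    simp only [LinearMap.id_apply] at h0
    rw [DopWord_nil]
    simp only [LinearMap.id_apply, map_mul]
    rw [h0]
    ring
  | append_singleton t a ih =>
    rw [DopWord_append, LinearMap.comp_apply, DopWord_cons, DopWord_nil]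
    simp only [LinearMap.comp_apply, LinearMap.id_apply]
    rw [Dop_mul, map_add, map_add, ih hz _, ih (hz.Dop a) _, add_zero]

theorem memI.mul_right {q : Fin n → Fin n → k} {z : FreeAlgebra k (Fin n)} (hz : memI q z)
    (u : FreeAlgebra k (Fin n)) : memI q (z * u) := by
  intro w
  induction w using List.reverseRecOn generalizing u z with
  | nil =>
    have h0 := hz []
    rw [DopWord_nil] at h0
    simp only [LinearMap.id_apply] at h0
    rw [DopWord_nil]
    simp only [LinearMap.id_apply, map_mul]
    rw [h0]
    ring
  | append_singleton t a ih =>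
    rw [DopWord_append, LinearMap.comp_apply, DopWord_cons, DopWord_nil]
    simp only [LinearMap.comp_apply, LinearMap.id_apply]
    rw [Dop_mul, map_add, map_add, ih (hz.Dop a) _, ih (hz.gAct _ a) _, add_zero]

theorem memI.add {q : Fin n → Fin n → k} {x y : FreeAlgebra k (Fin n)}
    (hx : memI q x) (hy : memI q y) : memI q (x + y) := by
  intro w
  rw [map_add, map_add, hx w, hy w, add_zero]

theorem memI.smul {q : Fin n → Fin n → k} {x : FreeAlgebra k (Fin n)}
    (hx : memI q x) (c : k) : memI q (c • x) := by
  intro w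
  rw [map_smul, map_smul, hx w, smul_zero]

theorem nicholsRel_iff_memI {q : Fin n → Fin n → k} {x y : FreeAlgebra k (Fin n)} :
    nicholsRel q x y ↔ memI q (x - y) := Iff.rfl

end NicholsAux3
section NicholsAux4

variable {k : Type*} [Field k] {n : ℕ}

/-- The relation `nicholsRel` is a ring congruence. -/
def nicholsCon (q : Fin n → Fin n → k) : RingCon (FreeAlgebra k (Fin n)) where
  r := nicholsRel q
  iseqv := by
    constructor
    · intro x
      rw [nicholsRel_iff_memI, sub_self]
      intro w; simp
    · intro x y hxy
      rw [nicholsRel_iff_memI] at hxy ⊢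
      rw [show y - x = (-1 : k) • (x - y) by simp]
      exact hxy.smul _
    · intro x y z hxy hyz
      rw [nicholsRel_iff_memI] at hxy hyz ⊢
      rw [show x - z = (x - y) + (y - z) by abel]
      exact hxy.add hyz
  add' := by
    intro a b c d hab hcd
    have hab' : memI q (a - b) := hab
    have hcd' : memI q (c - d) := hcd
    show memI q (a + c - (b + d))
    rw [show a + c - (b + d) = (a - b) + (c - d) by abel]
    exact hab'.add hcd'
  mul' := by
    intro a b c d hab hcd
    have hab' : memI q (a - b) := hab
    have hcd' : memI q (c - d) := hcd
    show memI q (a * c - b * d)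
    rw [show a * c - b * d = a * (c - d) + (a - b) * d by noncomm_ring]
    exact (hcd'.mul_left a).add (hab'.mul_right d)

theorem memI_of_mkAlgHom_eq_zero {q : Fin n → Fin n → k} {z : FreeAlgebra k (Fin n)}
    (h : RingQuot.mkAlgHom k (nicholsRel q) z = 0) : memI q z := by
  have hc1 : RingQuot.mkRingHom (nicholsRel q) z = 0 := by
    have hc := RingQuot.mkAlgHom_coe k (nicholsRel q)
    calc RingQuot.mkRingHom (nicholsRel q) z
        = (RingQuot.mkAlgHom k (nicholsRel q) : FreeAlgebra k (Fin n) →+* RingQuot (nicholsRel q)) z := by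
          rw [hc]
      _ = RingQuot.mkAlgHom k (nicholsRel q) z := rfl
      _ = 0 := h
  have hcoe : RingQuot.mkRingHom (nicholsRel q) z = RingQuot.mkRingHom (nicholsRel q) 0 := by
    rw [hc1, map_zero]
  have hrel : ∀ ⦃x y : FreeAlgebra k (Fin n)⦄, nicholsRel q x y →
      (nicholsCon q).mk' x = (nicholsCon q).mk' y := by
    intro x y hxy
    exact RingCon.eq (nicholsCon q) |>.mpr hxy
  have := congrArg (RingQuot.lift ⟨(nicholsCon q).mk', hrel⟩) hcoe
  rw [RingQuot.lift_mkRingHom_apply, RingQuot.lift_mkRingHom_apply] at this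
  have hcz : (nicholsCon q) z 0 := (RingCon.eq (nicholsCon q)).mp this
  have : memI q (z - 0) := hcz
  simpa using this

end NicholsAux4
section NicholsAux5

variable {k : Type*} [Field k] {n : ℕ}

/-- The scalar `∏_{l<m} (q_{ji}⁻¹ - q_{ii}^l q_{ij})`. -/
def dcoef (q : Fin n → Fin n → k) (i j : Fin n) : ℕ → k
  | 0 => 1
  | m + 1 => ((q j i)⁻¹ - q i i ^ m * q i j) * dcoef q i j m

/-- The `q⁻¹`-integer `[N]_{q_{ii}⁻¹}`. -/
def ecoef (q : Fin n → Fin n → k) (i : Fin n) : ℕ → k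
  | 0 => 0
  | N + 1 => 1 + (q i i)⁻¹ * ecoef q i N

/-- The `q⁻¹`-factorial. -/
def fcoef (q : Fin n → Fin n → k) (i : Fin n) : ℕ → k
  | 0 => 1
  | N + 1 => ecoef q i (N + 1) * fcoef q i N

theorem gAct_adIter (q : Fin n → Fin n → k) (i j : Fin n) (m : ℕ)
    (r : Fin n → Fin n → k) (a : Fin n) :
    gAct r a ((adSigma q i)^[m] (FreeAlgebra.ι k j)) =
      (r a i ^ m * r a j) • (adSigma q i)^[m] (FreeAlgebra.ι k j) := by
  induction m generalizing r a with
  | zero => simp [gAct_ι]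
  | succ m ih =>
    rw [Function.iterate_succ_apply']
    set Z := (adSigma q i)^[m] (FreeAlgebra.ι k j) with hZ
    have hAd : adSigma q i Z
        = FreeAlgebra.ι k i * Z - (q i i ^ m * q i j) • (Z * FreeAlgebra.ι k i) := by
      show FreeAlgebra.ι k i * Z - gAct q i Z * FreeAlgebra.ι k i = _
      rw [ih q i, smul_mul_assoc]
    rw [hAd, map_sub, map_smul, map_mul, map_mul, gAct_ι, ih r a]
    simp only [smul_mul_assoc, mul_smul_comm, smul_smul, smul_sub]
    match_scalars <;> ring

theorem constTerm_adIter (q : Fin n → Fin n → k) (i j : Fin n) (m : ℕ) :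
    constTerm k n ((adSigma q i)^[m] (FreeAlgebra.ι k j)) = 0 := by
  cases m with
  | zero => simp [constTerm_ι]
  | succ m =>
    rw [Function.iterate_succ_apply']
    show constTerm k n (FreeAlgebra.ι k i * _ - _) = 0
    rw [map_sub, map_mul, map_mul, constTerm_ι]
    simp

theorem Dop_adIter_i (q : Fin n → Fin n → k) (hq : ∀ a b, q a b ≠ 0) (i j : Fin n)
    (hij : i ≠ j) (m : ℕ) :
    Dop q i ((adSigma q i)^[m] (FreeAlgebra.ι k j)) = 0 := by
  induction m with
  | zero => simp [Dop_ι, hij]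
  | succ m ih =>
    rw [Function.iterate_succ_apply']
    show Dop q i (FreeAlgebra.ι k i * _ - _) = 0
    rw [gAct_adIter q i j m q i]
    set Z := (adSigma q i)^[m] (FreeAlgebra.ι k j) with hZ
    rw [map_sub, Dop_ι_mul, if_pos rfl, ih, mul_zero, smul_zero, add_zero,
      smul_mul_assoc, map_smul, Dop_mul, ih, zero_mul, zero_add,
      gAct_adIter q i j m (fun s t => (q s t)⁻¹) i, Dop_ι, if_pos rfl, mul_one]
    rw [smul_smul]
    rw [show q i i ^ m * q i j * ((q i i)⁻¹ ^ m * (q i j)⁻¹) = 1 by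
      rw [inv_pow, ← mul_inv]
      exact mul_inv_cancel₀ (mul_ne_zero (pow_ne_zero _ (hq i i)) (hq i j))]
    simp [hZ]

theorem Dop_adIter_ne (q : Fin n → Fin n → k) (i j a : Fin n)
    (hai : a ≠ i) (haj : a ≠ j) (m : ℕ) :
    Dop q a ((adSigma q i)^[m] (FreeAlgebra.ι k j)) = 0 := by
  induction m with
  | zero => simp [Dop_ι, haj]
  | succ m ih =>
    rw [Function.iterate_succ_apply']
    show Dop q a (FreeAlgebra.ι k i * _ - _) = 0
    rw [gAct_adIter q i j m q i]
    set Z := (adSigma q i)^[m] (FreeAlgebra.ι k j) with hZ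
    rw [map_sub, Dop_ι_mul, if_neg hai, ih, smul_mul_assoc, map_smul, Dop_mul, ih,
      Dop_ι, if_neg hai]
    simp

theorem Dop_adIter_j (q : Fin n → Fin n → k) (i j : Fin n) (hij : i ≠ j) (m : ℕ) :
    Dop q j ((adSigma q i)^[m] (FreeAlgebra.ι k j)) =
      dcoef q i j m • (FreeAlgebra.ι k i) ^ m := by
  induction m with
  | zero => simp [Dop_ι, dcoef]
  | succ m ih =>
    rw [Function.iterate_succ_apply']
    show Dop q j (FreeAlgebra.ι k i * _ - _) = _
    rw [gAct_adIter q i j m q i]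
    set Z := (adSigma q i)^[m] (FreeAlgebra.ι k j) with hZ
    have hji : j ≠ i := fun hc => hij hc.symm
    rw [map_sub, Dop_ι_mul, if_neg hji, zero_add, ih,
      smul_mul_assoc, map_smul, Dop_mul, ih, Dop_ι, if_neg hji, mul_zero,
      add_zero, mul_smul_comm, smul_mul_assoc]
    rw [show FreeAlgebra.ι k i * FreeAlgebra.ι k i ^ m = FreeAlgebra.ι k i ^ (m+1) from
      (pow_succ' _ _).symm]
    rw [show FreeAlgebra.ι k i ^ m * FreeAlgebra.ι k i = FreeAlgebra.ι k i ^ (m+1) from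
      (pow_succ _ _).symm]
    rw [smul_smul, smul_smul, ← sub_smul]
    congr 1
    show _ = ((q j i)⁻¹ - q i i ^ m * q i j) * dcoef q i j m
    ring

theorem Dop_pow_ne (q : Fin n → Fin n → k) (i a : Fin n) (hai : a ≠ i) (N : ℕ) :
    Dop q a ((FreeAlgebra.ι k i) ^ N) = 0 := by
  induction N with
  | zero => simpa using Dop_one q a
  | succ N ih =>
    rw [pow_succ', Dop_ι_mul, if_neg hai, ih, mul_zero, smul_zero, add_zero]

theorem Dop_pow_i (q : Fin n → Fin n → k) (i : Fin n) (N : ℕ) :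
    Dop q i ((FreeAlgebra.ι k i) ^ (N + 1)) = ecoef q i (N + 1) • (FreeAlgebra.ι k i) ^ N := by
  induction N with
  | zero =>
    rw [pow_one, Dop_ι, if_pos rfl]
    simp [ecoef]
  | succ N ih =>
    rw [pow_succ' _ (N+1), Dop_ι_mul, if_pos rfl, ih, mul_smul_comm]
    rw [show FreeAlgebra.ι k i * FreeAlgebra.ι k i ^ N = FreeAlgebra.ι k i ^ (N+1) from
      (pow_succ' _ _).symm]
    rw [smul_smul]
    have he : ecoef q i (N + 1 + 1) = 1 + (q i i)⁻¹ * ecoef q i (N + 1) := rfl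
    rw [he]
    match_scalars
    ring

theorem constTerm_pow (q : Fin n → Fin n → k) (i : Fin n) (N : ℕ) :
    constTerm k n ((FreeAlgebra.ι k i) ^ N) = if N = 0 then 1 else 0 := by
  cases N with
  | zero => simp
  | succ N => rw [pow_succ', map_mul, constTerm_ι, zero_mul]; simp

theorem DopWord_replicate (q : Fin n → Fin n → k) (i : Fin n) (N : ℕ) :
    constTerm k n (DopWord q (List.replicate N i) ((FreeAlgebra.ι k i) ^ N)) =
      fcoef q i N := by
  induction N with
  | zero => simp [DopWord_nil, fcoef]
  | succ N ih =>
    rw [List.replicate_succ', DopWord_append, LinearMap.comp_apply, DopWord_cons, DopWord_nil,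
      LinearMap.comp_apply, LinearMap.id_apply, Dop_pow_i, map_smul, map_smul, ih]
    show _ = ecoef q i (N + 1) * fcoef q i N
    simp

theorem memI_pow (q : Fin n → Fin n → k) (i : Fin n) (N : ℕ)
    (he : ecoef q i (N + 1) = 0) : memI q ((FreeAlgebra.ι k i) ^ (N + 1)) := by
  intro w
  rcases List.eq_nil_or_concat w with rfl | ⟨t, a, rfl⟩
  · rw [DopWord_nil]
    simpa using constTerm_pow q i (N+1)
  · rw [List.concat_eq_append, DopWord_append, LinearMap.comp_apply, DopWord_cons, DopWord_nil, LinearMap.comp_apply,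
      LinearMap.id_apply]
    by_cases ha : a = i
    · rw [ha, Dop_pow_i, he, zero_smul, map_zero, map_zero]
    · rw [Dop_pow_ne q i a ha, map_zero, map_zero]

theorem memI_adIter (q : Fin n → Fin n → k) (hq : ∀ a b, q a b ≠ 0) (i j : Fin n)
    (hij : i ≠ j) (m : ℕ)
    (hd : dcoef q i j m = 0 ∨ memI q ((FreeAlgebra.ι k i) ^ m)) :
    memI q ((adSigma q i)^[m] (FreeAlgebra.ι k j)) := by
  intro w
  rcases List.eq_nil_or_concat w with rfl | ⟨t, a, rfl⟩
  · rw [DopWord_nil]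
    simpa using constTerm_adIter q i j m
  · rw [List.concat_eq_append, DopWord_append, LinearMap.comp_apply, DopWord_cons, DopWord_nil, LinearMap.comp_apply,
      LinearMap.id_apply]
    by_cases hai : a = i
    · rw [hai, Dop_adIter_i q hq i j hij, map_zero, map_zero]
    · by_cases haj : a = j
      · rw [haj, Dop_adIter_j q i j hij]
        rcases hd with hd | hd
        · rw [hd, zero_smul, map_zero, map_zero]
        · rw [map_smul, map_smul, hd t, smul_zero]
      · rw [Dop_adIter_ne q i j a hai haj, map_zero, map_zero]

theorem ecoef_geom (q : Fin n → Fin n → k) (i : Fin n) (hqii : q i i ≠ 0) (m : ℕ) :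
    q i i ^ m * ecoef q i (m + 1) = ∑ l ∈ Finset.range (m + 1), q i i ^ l := by
  induction m with
  | zero => simp [ecoef]
  | succ m ih =>
    rw [Finset.sum_range_succ, ← ih]
    show q i i ^ (m + 1) * (1 + (q i i)⁻¹ * ecoef q i (m + 1)) = _
    field_simp
    ring

end NicholsAux5
/-- In the Nichols algebra `B(V)` of a diagonal braiding, with
`m_{ij} = min { m : [m+1]_{q_{ii}} (q_{ii}^m q_{ij} q_{ji} - 1) = 0 }` (assumed to
exist), one has `(ad_σ xᵢ)^{m_{ij}+1}(x_j) = 0` while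
`(ad_σ xᵢ)^{m_{ij}}(x_j) ≠ 0`. -/
theorem stmt16 {k : Type*} [Field k] [CharZero k] {n : ℕ}
    (q : Fin n → Fin n → k) (hq : ∀ i j, q i j ≠ 0)
    (i j : Fin n) (hij : i ≠ j)
    (h : ∃ m : ℕ,
      (∑ l ∈ Finset.range (m + 1), q i i ^ l) * (q i i ^ m * q i j * q j i - 1) = 0) :
    RingQuot.mkAlgHom k (nicholsRel q)
        ((adSigma q i)^[sInf {m : ℕ | (∑ l ∈ Finset.range (m + 1), q i i ^ l) * (q i i ^ m * q i j * q j i - 1) = 0} + 1] (FreeAlgebra.ι k j)) = 0 ∧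
    RingQuot.mkAlgHom k (nicholsRel q)
        ((adSigma q i)^[sInf {m : ℕ | (∑ l ∈ Finset.range (m + 1), q i i ^ l) * (q i i ^ m * q i j * q j i - 1) = 0}] (FreeAlgebra.ι k j)) ≠ 0 := by
  set S : Set ℕ :=
    {m : ℕ | (∑ l ∈ Finset.range (m + 1), q i i ^ l) * (q i i ^ m * q i j * q j i - 1) = 0}
    with hS
  set m₀ := sInf S with hm₀def
  have hne : S.Nonempty := h
  have hm₀ : m₀ ∈ S := Nat.sInf_mem hne
  have hlt : ∀ m, m < m₀ → m ∉ S := fun m hm => Nat.notMem_of_lt_sInf hm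
  -- scalar facts
  have e_ne : ∀ N, N < m₀ → ecoef q i (N + 1) ≠ 0 := by
    intro N hN he0
    apply hlt N hN
    have hgeom := ecoef_geom q i (hq i i) N
    rw [he0, mul_zero] at hgeom
    show (∑ l ∈ Finset.range (N + 1), q i i ^ l) * (q i i ^ N * q i j * q j i - 1) = 0
    rw [← hgeom, zero_mul]
  have f_ne : ∀ N, N ≤ m₀ → fcoef q i N ≠ 0 := by
    intro N
    induction N with
    | zero => intro _; exact one_ne_zero
    | succ N ih =>
      intro hN
      have hN' : N < m₀ := lt_of_lt_of_le (Nat.lt_succ_self N) hN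
      show ecoef q i (N + 1) * fcoef q i N ≠ 0
      exact mul_ne_zero (e_ne N hN') (ih (le_of_lt hN'))
  have key : ∀ N : ℕ, (q j i)⁻¹ - q i i ^ N * q i j
      = (q j i)⁻¹ * (1 - q i i ^ N * q i j * q j i) := by
    intro N
    rw [mul_sub, mul_one]
    congr 1
    rw [show (q j i)⁻¹ * (q i i ^ N * q i j * q j i)
        = q i i ^ N * q i j * ((q j i)⁻¹ * q j i) by ring,
      inv_mul_cancel₀ (hq j i), mul_one]
  have d_ne : ∀ N, N ≤ m₀ → dcoef q i j N ≠ 0 := by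
    intro N
    induction N with
    | zero => intro _; exact one_ne_zero
    | succ N ih =>
      intro hN
      have hN' : N < m₀ := lt_of_lt_of_le (Nat.lt_succ_self N) hN
      show ((q j i)⁻¹ - q i i ^ N * q i j) * dcoef q i j N ≠ 0
      refine mul_ne_zero ?_ (ih (le_of_lt hN'))
      rw [key N]
      refine mul_ne_zero (inv_ne_zero (hq j i)) ?_
      intro hc
      apply hlt N hN'
      show (∑ l ∈ Finset.range (N + 1), q i i ^ l) * (q i i ^ N * q i j * q j i - 1) = 0
      rw [show q i i ^ N * q i j * q j i - 1 = -(1 - q i i ^ N * q i j * q j i) by ring,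
        hc, neg_zero, mul_zero]
  constructor
  · -- the zero part
    have hmem : memI q ((adSigma q i)^[m₀ + 1] (FreeAlgebra.ι k j)) := by
      by_cases hd : dcoef q i j (m₀ + 1) = 0
      · exact memI_adIter q hq i j hij (m₀ + 1) (Or.inl hd)
      · have hfac : (1 : k) - q i i ^ m₀ * q i j * q j i ≠ 0 := by
          intro hc
          apply hd
          show ((q j i)⁻¹ - q i i ^ m₀ * q i j) * dcoef q i j m₀ = 0
          rw [key m₀, hc, mul_zero, zero_mul]
        have hsum : (∑ l ∈ Finset.range (m₀ + 1), q i i ^ l) = 0 := by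
          have := hm₀
          rw [hS] at this
          have h2 : (∑ l ∈ Finset.range (m₀ + 1), q i i ^ l)
              * (q i i ^ m₀ * q i j * q j i - 1) = 0 := this
          rcases mul_eq_zero.mp h2 with h3 | h3
          · exact h3
          · exfalso
            apply hfac
            rw [show (1 : k) - q i i ^ m₀ * q i j * q j i
              = -(q i i ^ m₀ * q i j * q j i - 1) by ring, h3, neg_zero]
        have he : ecoef q i (m₀ + 1) = 0 := by
          have hgeom := ecoef_geom q i (hq i i) m₀
          rw [hsum] at hgeom
          have hp : q i i ^ m₀ ≠ 0 := pow_ne_zero _ (hq i i)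
          exact (mul_eq_zero.mp hgeom).resolve_left hp
        exact memI_adIter q hq i j hij (m₀ + 1) (Or.inr (memI_pow q i m₀ he))
    have hrel : nicholsRel q ((adSigma q i)^[m₀ + 1] (FreeAlgebra.ι k j)) 0 := by
      rw [nicholsRel_iff_memI, sub_zero]
      exact hmem
    calc RingQuot.mkAlgHom k (nicholsRel q) ((adSigma q i)^[m₀ + 1] (FreeAlgebra.ι k j))
        = RingQuot.mkAlgHom k (nicholsRel q) 0 := RingQuot.mkAlgHom_rel k hrel
      _ = 0 := map_zero _
  · -- the nonzero part
    intro h0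
    have hmem := memI_of_mkAlgHom_eq_zero h0
    have hval := hmem (List.replicate m₀ i ++ [j])
    rw [DopWord_append, LinearMap.comp_apply, DopWord_cons, DopWord_nil, LinearMap.comp_apply,
      LinearMap.id_apply, Dop_adIter_j q i j hij, map_smul, map_smul,
      DopWord_replicate] at hval
    have : dcoef q i j m₀ * fcoef q i m₀ = 0 := by simpa using hval
    exact mul_ne_zero (d_ne m₀ le_rfl) (f_ne m₀ le_rfl) this

end
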